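/- Let q ≥ 3 be a prime power and a ∈ F_q. The subgraph H_a of H(q) induced by the matrices [[α^i, 0],[α^j·a, α^j]] for i,j ∈ {0,...,q−2}, with edges given only by row multiplications/divisions by α, is isomorphic to the toroidal grid C_{q−1} □ C_{q−1}. -/

import Mathlib

open Matrix Finset

/-- A graph is Hamilton connected if any two distinct vertices are joined by a Hamilton path. -/
def HamConn {V : Type*} [DecidableEq V] (G : SimpleGraph V) : Prop :=
  ∀ x y : V, x ≠ y → ∃ p : G.Walk x y, p.IsHamiltonian

/-- A bipartite graph is Hamilton laceable: there is a proper 2-coloring such that any two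
vertices of different colors are joined by a Hamilton path. -/
def HamLaceable {V : Type*} [DecidableEq V] (G : SimpleGraph V) : Prop :=
  ∃ c : V → Bool, (∀ ⦃x y⦄, G.Adj x y → c x ≠ c y) ∧
    ∀ x y : V, c x ≠ c y → ∃ p : G.Walk x y, p.IsHamiltonian

/-- The undirected Cayley graph of a group with connection set `S` (acting on the left). -/
def cayley {G : Type*} [Group G] (S : Set G) : SimpleGraph G :=
  SimpleGraph.fromRel (fun x y => ∃ s ∈ S, y = s * x)

/-- The set of row operations specified by a transition graph `E` on `[n]` together with
row multiplications/divisions by `α`: elementary matrices `A_{ij}`, `A_{ij}⁻¹` for edges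
`(i,j)` of `E`, and `M_i`, `M_i⁻¹` for all `i`. -/
def ops (n : ℕ) (F : Type*) [Field F] (E : Fin n → Fin n → Prop) (α : F) :
    Set (Matrix.GeneralLinearGroup (Fin n) F) :=
  {A | (∃ i j, E i j ∧ ((A : Matrix (Fin n) (Fin n) F) = 1 + Matrix.single j i 1 ∨
        (A : Matrix (Fin n) (Fin n) F) = 1 + Matrix.single j i (-1))) ∨
      (∃ i, (A : Matrix (Fin n) (Fin n) F) = 1 + Matrix.single i i (α - 1) ∨
        (A : Matrix (Fin n) (Fin n) F) = 1 + Matrix.single i i (α⁻¹ - 1))}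

/-- Bypass transition graphs: a single vertex, or obtained from a bypass transition graph
on `[n-1]` by adding the vertex `n` with an in-edge from some `i ∈ [n-1]` and an out-edge
to some `j ∈ [n-1]`. -/
inductive IsBypass : (n : ℕ) → (Fin n → Fin n → Prop) → Prop
  | single (E : Fin 1 → Fin 1 → Prop) : IsBypass 1 E
  | step (n : ℕ) (E : Fin (n + 1) → Fin (n + 1) → Prop)
      (hin : ∃ i : Fin n, E i.castSucc (Fin.last n))
      (hout : ∃ j : Fin n, E (Fin.last n) j.castSucc)
      (hrec : IsBypass n (fun a b => E a.castSucc b.castSucc)) :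
      IsBypass (n + 1) E

lemma stdscale_zero {F : Type} [Field F] (c : F) :
    (1 + Matrix.single (0 : Fin 2) 0 (c - 1)) = !![c, 0; 0, 1] := by
  ext i j
  fin_cases i <;> fin_cases j <;>
    simp [Matrix.single, Matrix.one_apply]

lemma stdscale_one {F : Type} [Field F] (c : F) :
    (1 + Matrix.single (1 : Fin 2) 1 (c - 1)) = !![1, 0; 0, c] := by
  ext i j
  fin_cases i <;> fin_cases j <;>
    simp [Matrix.single, Matrix.one_apply]

lemma fin2_mat_eq {F : Type} [Field F] {a b c d e f g h : F} :
    !![a, b; c, d] = !![e, f; g, h] ↔ a = e ∧ b = f ∧ c = g ∧ d = h := by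
  constructor
  · intro H
    exact ⟨by simpa using congrFun (congrFun H 0) 0,
           by simpa using congrFun (congrFun H 0) 1,
           by simpa using congrFun (congrFun H 1) 0,
           by simpa using congrFun (congrFun H 1) 1⟩
  · rintro ⟨rfl, rfl, rfl, rfl⟩; rfl


/-- the subgraph `H_a` induced on
`V_a = {[[α^i,0],[α^j a, α^j]] : i,j ∈ {0,…,q−2}}` with edges given only by row
multiplications/divisions by `α` is isomorphic to the toroidal grid `C_{q−1} □ C_{q−1}`. -/
theorem Ha_iso_torus (q : ℕ) (hq3 : 3 ≤ q)
    (F : Type) [Field F] [Fintype F] [DecidableEq F] (hq : Fintype.card F = q)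
    (α : Fˣ) (hα : ∀ x : Fˣ, x ∈ Subgroup.zpowers α) (a : F) :
    Nonempty
      ((SimpleGraph.induce
          {A : Matrix.GeneralLinearGroup (Fin 2) F | ∃ i j : ℕ,
            (A : Matrix (Fin 2) (Fin 2) F) =
              !![(α : F) ^ i, 0; (α : F) ^ j * a, (α : F) ^ j]}
          (cayley (ops 2 F (fun _ _ => False) (α : F)))) ≃g
        ((SimpleGraph.cycleGraph (q - 1)).boxProd (SimpleGraph.cycleGraph (q - 1)))) := by
  haveI : NeZero (q - 1) := ⟨by omega⟩
  have hord : orderOf α = q - 1 := by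
    rw [orderOf_eq_card_of_forall_mem_zpowers hα, Nat.card_eq_fintype_card,
      Fintype.card_units, hq]
  have hval1 : ((1 : Fin (q - 1))).val = 1 := by
    rw [Fin.val_one']
    exact Nat.mod_eq_of_lt (by omega)
  have hpow : ∀ {s t : ℕ}, α ^ s = α ^ t ↔ s % (q - 1) = t % (q - 1) := by
    intro s t; rw [pow_inj_mod, hord]
  have hFpow : ∀ {s t : ℕ}, (α : F) ^ s = (α : F) ^ t ↔ s % (q - 1) = t % (q - 1) := by
    intro s t
    rw [← hpow]
    constructor
    · intro h
      exact Units.ext (by rw [Units.val_pow_eq_pow_val, Units.val_pow_eq_pow_val]; exact h)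
    · intro h
      have := congrArg Units.val h
      simpa [Units.val_pow_eq_pow_val] using this
  have key0 : ∀ u v : Fin (q - 1), (α : F) ^ v.val = (α : F) ^ u.val ↔ v = u := by
    intro u v
    rw [hFpow, Nat.mod_eq_of_lt v.isLt, Nat.mod_eq_of_lt u.isLt]
    exact ⟨Fin.ext, congrArg Fin.val⟩
  have hsucc : ∀ u : Fin (q - 1), (u + 1).val = (u.val + 1) % (q - 1) := by
    intro u; rw [Fin.add_def, hval1]
  have key1 : ∀ u v : Fin (q - 1), (α : F) ^ v.val = (α : F) * (α : F) ^ u.val ↔ v = u + 1 := by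
    intro u v
    rw [← pow_succ', hFpow, Nat.mod_eq_of_lt v.isLt]
    constructor
    · intro h; exact Fin.ext (by rw [hsucc]; exact h)
    · intro h; rw [h, hsucc]
  have key2 : ∀ u v : Fin (q - 1), (α : F) ^ v.val = (α : F)⁻¹ * (α : F) ^ u.val ↔ u = v + 1 := by
    intro u v
    constructor
    · intro h
      have h' : (α : F) ^ u.val = (α : F) * (α : F) ^ v.val := by
        rw [h, ← mul_assoc, mul_inv_cancel₀ (Units.ne_zero α), one_mul]
      exact (key1 v u).mp h'
    · intro h
      have h' := (key1 v u).mpr h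
      rw [h', ← mul_assoc, inv_mul_cancel₀ (Units.ne_zero α), one_mul]
  have hdet : ∀ i j : ℕ,
      (!![(α : F) ^ i, 0; (α : F) ^ j * a, (α : F) ^ j] : Matrix (Fin 2) (Fin 2) F).det ≠ 0 := by
    intro i j
    rw [Matrix.det_fin_two_of]
    simp only [zero_mul, sub_zero]
    exact mul_ne_zero (pow_ne_zero _ (Units.ne_zero α)) (pow_ne_zero _ (Units.ne_zero α))
  let M : ℕ → ℕ → Matrix.GeneralLinearGroup (Fin 2) F := fun i j =>
    Matrix.GeneralLinearGroup.mkOfDetNeZero _ (hdet i j)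
  have hMcoe : ∀ i j, (M i j : Matrix (Fin 2) (Fin 2) F) =
      !![(α : F) ^ i, 0; (α : F) ^ j * a, (α : F) ^ j] := fun i j => rfl
  set S : Set (Matrix.GeneralLinearGroup (Fin 2) F) :=
    {A | ∃ i j : ℕ, (A : Matrix (Fin 2) (Fin 2) F) =
      !![(α : F) ^ i, 0; (α : F) ^ j * a, (α : F) ^ j]} with hS
  let f : Fin (q - 1) × Fin (q - 1) → ↥S := fun p =>
    ⟨M p.1.val p.2.val, ⟨p.1.val, p.2.val, rfl⟩⟩
  have hfcoe : ∀ w : Fin (q - 1) × Fin (q - 1),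
      ((f w : Matrix.GeneralLinearGroup (Fin 2) F) : Matrix (Fin 2) (Fin 2) F) =
        !![(α : F) ^ w.1.val, 0; (α : F) ^ w.2.val * a, (α : F) ^ w.2.val] := fun w => rfl
  have hinj : Function.Injective f := by
    intro p p' h
    have h' : ((f p : Matrix.GeneralLinearGroup (Fin 2) F) : Matrix (Fin 2) (Fin 2) F) =
        ((f p' : Matrix.GeneralLinearGroup (Fin 2) F) : Matrix (Fin 2) (Fin 2) F) := by rw [h]
    rw [hfcoe, hfcoe, fin2_mat_eq] at h'
    obtain ⟨h1, -, -, h2⟩ := h'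
    exact Prod.ext ((key0 p'.1 p.1).mp h1) ((key0 p'.2 p.2).mp h2)
  have hsurj : Function.Surjective f := by
    rintro ⟨A, i, j, hA⟩
    refine ⟨(⟨i % (q - 1), Nat.mod_lt _ (by omega)⟩, ⟨j % (q - 1), Nat.mod_lt _ (by omega)⟩), ?_⟩
    apply Subtype.ext
    apply Units.ext
    rw [hfcoe, hA]
    have e1 : (α : F) ^ (i % (q - 1)) = (α : F) ^ i :=
      hFpow.mpr (Nat.mod_mod_of_dvd i dvd_rfl)
    have e2 : (α : F) ^ (j % (q - 1)) = (α : F) ^ j :=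
      hFpow.mpr (Nat.mod_mod_of_dvd j dvd_rfl)
    rw [show (⟨i % (q-1), Nat.mod_lt _ (by omega)⟩ : Fin (q-1)).val = i % (q-1) from rfl]
    rw [show (⟨j % (q-1), Nat.mod_lt _ (by omega)⟩ : Fin (q-1)).val = j % (q-1) from rfl]
    rw [e1, e2]
  -- characterization of ops
  have hops : ∀ s : Matrix.GeneralLinearGroup (Fin 2) F,
      s ∈ ops 2 F (fun _ _ => False) (α : F) ↔
        ((s : Matrix (Fin 2) (Fin 2) F) = !![(α : F), 0; 0, 1] ∨
         (s : Matrix (Fin 2) (Fin 2) F) = !![(α : F)⁻¹, 0; 0, 1] ∨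
         (s : Matrix (Fin 2) (Fin 2) F) = !![1, 0; 0, (α : F)] ∨
         (s : Matrix (Fin 2) (Fin 2) F) = !![1, 0; 0, (α : F)⁻¹]) := by
    intro s
    simp only [ops, Set.mem_setOf_eq, false_and, exists_false, false_or]
    constructor
    · rintro ⟨b, h | h⟩ <;> fin_cases b
      exacts [Or.inl (h.trans (by rw [← stdscale_zero]; rfl)),
              Or.inr (Or.inr (Or.inl (h.trans (by rw [← stdscale_one]; rfl)))),
              Or.inr (Or.inl (h.trans (by rw [← stdscale_zero]; rfl))),
              Or.inr (Or.inr (Or.inr (h.trans (by rw [← stdscale_one]; rfl))))]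
    · rintro (h | h | h | h)
      exacts [⟨0, Or.inl (by rw [stdscale_zero]; exact h)⟩,
              ⟨0, Or.inr (by rw [stdscale_zero]; exact h)⟩,
              ⟨1, Or.inl (by rw [stdscale_one]; exact h)⟩,
              ⟨1, Or.inr (by rw [stdscale_one]; exact h)⟩]
  -- the four scaling matrices as elements of GL
  have hdet1 : ∀ c : F, c ≠ 0 → (!![c, 0; 0, (1:F)] : Matrix (Fin 2) (Fin 2) F).det ≠ 0 := by
    intro c hc; rw [Matrix.det_fin_two_of]; simpa using hc
  have hdet2 : ∀ c : F, c ≠ 0 → (!![(1:F), 0; 0, c] : Matrix (Fin 2) (Fin 2) F).det ≠ 0 := by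
    intro c hc; rw [Matrix.det_fin_two_of]; simpa using hc
  let s1 : Matrix.GeneralLinearGroup (Fin 2) F :=
    Matrix.GeneralLinearGroup.mkOfDetNeZero _ (hdet1 (α : F) (Units.ne_zero α))
  let s2 : Matrix.GeneralLinearGroup (Fin 2) F :=
    Matrix.GeneralLinearGroup.mkOfDetNeZero _ (hdet1 ((α : F)⁻¹) (inv_ne_zero (Units.ne_zero α)))
  let s3 : Matrix.GeneralLinearGroup (Fin 2) F :=
    Matrix.GeneralLinearGroup.mkOfDetNeZero _ (hdet2 (α : F) (Units.ne_zero α))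
  let s4 : Matrix.GeneralLinearGroup (Fin 2) F :=
    Matrix.GeneralLinearGroup.mkOfDetNeZero _ (hdet2 ((α : F)⁻¹) (inv_ne_zero (Units.ne_zero α)))
  -- one step characterization
  have hstep : ∀ u v : Fin (q - 1) × Fin (q - 1),
      (∃ s ∈ ops 2 F (fun _ _ => False) (α : F),
          (f v : Matrix.GeneralLinearGroup (Fin 2) F) = s * (f u : Matrix.GeneralLinearGroup (Fin 2) F)) ↔
        ((v.1 = u.1 + 1 ∧ v.2 = u.2) ∨ (u.1 = v.1 + 1 ∧ v.2 = u.2) ∨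
         (v.2 = u.2 + 1 ∧ v.1 = u.1) ∨ (u.2 = v.2 + 1 ∧ v.1 = u.1)) := by
    intro u v
    constructor
    · rintro ⟨s, hs, hmul⟩
      rw [hops] at hs
      have hmul' : ((f v : Matrix.GeneralLinearGroup (Fin 2) F) : Matrix (Fin 2) (Fin 2) F) =
          (s : Matrix (Fin 2) (Fin 2) F) *
            ((f u : Matrix.GeneralLinearGroup (Fin 2) F) : Matrix (Fin 2) (Fin 2) F) := by
        rw [hmul]; rfl
      rw [hfcoe, hfcoe] at hmul'
      rcases hs with h | h | h | h <;> rw [h, Matrix.mul_fin_two, fin2_mat_eq] at hmul' <;>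
        obtain ⟨h00, -, -, h11⟩ := hmul'
      · rw [zero_mul, add_zero] at h00
        rw [zero_mul, zero_add, one_mul] at h11
        exact Or.inl ⟨(key1 u.1 v.1).mp h00, (key0 u.2 v.2).mp h11⟩
      · rw [zero_mul, add_zero] at h00
        rw [zero_mul, zero_add, one_mul] at h11
        exact Or.inr (Or.inl ⟨(key2 u.1 v.1).mp h00, (key0 u.2 v.2).mp h11⟩)
      · rw [zero_mul, add_zero, one_mul] at h00
        rw [zero_mul, zero_add] at h11
        exact Or.inr (Or.inr (Or.inl ⟨(key1 u.2 v.2).mp h11, (key0 u.1 v.1).mp h00⟩))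
      · rw [zero_mul, add_zero, one_mul] at h00
        rw [zero_mul, zero_add] at h11
        exact Or.inr (Or.inr (Or.inr ⟨(key2 u.2 v.2).mp h11, (key0 u.1 v.1).mp h00⟩))
    · rintro (⟨h1, h2⟩ | ⟨h1, h2⟩ | ⟨h1, h2⟩ | ⟨h1, h2⟩)
      · refine ⟨s1, (hops s1).mpr (Or.inl rfl), ?_⟩
        apply Units.ext
        rw [Units.val_mul]
        show ((f v : Matrix.GeneralLinearGroup (Fin 2) F) : Matrix (Fin 2) (Fin 2) F) =
          !![(α : F), 0; 0, 1] * ((f u : Matrix.GeneralLinearGroup (Fin 2) F) : Matrix (Fin 2) (Fin 2) F)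
        rw [hfcoe, hfcoe, Matrix.mul_fin_two, fin2_mat_eq]
        exact ⟨by rw [zero_mul, add_zero]; exact (key1 u.1 v.1).mpr h1, by ring,
               by rw [h2]; ring, by rw [h2]; ring⟩
      · refine ⟨s2, (hops s2).mpr (Or.inr (Or.inl rfl)), ?_⟩
        apply Units.ext
        rw [Units.val_mul]
        show ((f v : Matrix.GeneralLinearGroup (Fin 2) F) : Matrix (Fin 2) (Fin 2) F) =
          !![(α : F)⁻¹, 0; 0, 1] * ((f u : Matrix.GeneralLinearGroup (Fin 2) F) : Matrix (Fin 2) (Fin 2) F)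
        rw [hfcoe, hfcoe, Matrix.mul_fin_two, fin2_mat_eq]
        exact ⟨by rw [zero_mul, add_zero]; exact (key2 u.1 v.1).mpr h1, by ring,
               by rw [h2]; ring, by rw [h2]; ring⟩
      · refine ⟨s3, (hops s3).mpr (Or.inr (Or.inr (Or.inl rfl))), ?_⟩
        apply Units.ext
        rw [Units.val_mul]
        show ((f v : Matrix.GeneralLinearGroup (Fin 2) F) : Matrix (Fin 2) (Fin 2) F) =
          !![(1:F), 0; 0, (α : F)] * ((f u : Matrix.GeneralLinearGroup (Fin 2) F) : Matrix (Fin 2) (Fin 2) F)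
        rw [hfcoe, hfcoe, Matrix.mul_fin_two, fin2_mat_eq]
        refine ⟨by rw [h2]; ring, by ring, ?_, ?_⟩
        · rw [zero_mul, zero_add, ← mul_assoc]
          exact congrArg (· * a) ((key1 u.2 v.2).mpr h1)
        · rw [zero_mul, zero_add]
          exact (key1 u.2 v.2).mpr h1
      · refine ⟨s4, (hops s4).mpr (Or.inr (Or.inr (Or.inr rfl))), ?_⟩
        apply Units.ext
        rw [Units.val_mul]
        show ((f v : Matrix.GeneralLinearGroup (Fin 2) F) : Matrix (Fin 2) (Fin 2) F) =
          !![(1:F), 0; 0, (α : F)⁻¹] * ((f u : Matrix.GeneralLinearGroup (Fin 2) F) : Matrix (Fin 2) (Fin 2) F)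
        rw [hfcoe, hfcoe, Matrix.mul_fin_two, fin2_mat_eq]
        refine ⟨by rw [h2]; ring, by ring, ?_, ?_⟩
        · rw [zero_mul, zero_add, ← mul_assoc]
          exact congrArg (· * a) ((key2 u.2 v.2).mpr h1)
        · rw [zero_mul, zero_add]
          exact (key2 u.2 v.2).mpr h1
  have hsub : ∀ x y : Fin (q - 1), (x - y).val = 1 ↔ x = y + 1 := by
    intro x y
    constructor
    · intro hxy
      have hxy' : x - y = 1 := Fin.ext (by rw [hxy, hval1])
      rw [sub_eq_iff_eq_add] at hxy'
      rw [hxy', add_comm]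
    · intro hxy
      have hxy' : x - y = 1 := by rw [hxy, add_sub_cancel_left]
      rw [hxy', hval1]
  have hone : ∀ x : Fin (q - 1), x ≠ x + 1 := by
    intro x hx
    have hx' := congrArg Fin.val hx
    rw [hsucc] at hx'
    rcases Nat.lt_or_ge (x.val + 1) (q - 1) with hlt | hge
    · rw [Nat.mod_eq_of_lt hlt] at hx'; omega
    · have hx1 : x.val + 1 = q - 1 := by have := x.isLt; omega
      rw [hx1, Nat.mod_self] at hx'
      have := x.isLt
      omega
  refine ⟨SimpleGraph.Iso.symm ⟨Equiv.ofBijective f ⟨hinj, hsurj⟩, ?_⟩⟩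
  intro p p'
  show (cayley (ops 2 F (fun _ _ => False) (α : F))).Adj
      (f p : Matrix.GeneralLinearGroup (Fin 2) F) (f p' : Matrix.GeneralLinearGroup (Fin 2) F) ↔
    ((SimpleGraph.cycleGraph (q - 1)).boxProd (SimpleGraph.cycleGraph (q - 1))).Adj p p'
  rw [cayley, SimpleGraph.fromRel_adj]
  rw [hstep p p', hstep p' p]
  rw [SimpleGraph.boxProd_adj, SimpleGraph.cycleGraph_adj', SimpleGraph.cycleGraph_adj',
    hsub, hsub, hsub, hsub]
  constructor
  · rintro ⟨-, hD⟩
    rcases hD with (⟨h1, h2⟩ | ⟨h1, h2⟩ | ⟨h1, h2⟩ | ⟨h1, h2⟩) |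
      (⟨h1, h2⟩ | ⟨h1, h2⟩ | ⟨h1, h2⟩ | ⟨h1, h2⟩)
    exacts [Or.inl ⟨Or.inr h1, h2.symm⟩, Or.inl ⟨Or.inl h1, h2.symm⟩,
            Or.inr ⟨Or.inr h1, h2.symm⟩, Or.inr ⟨Or.inl h1, h2.symm⟩,
            Or.inl ⟨Or.inl h1, h2⟩, Or.inl ⟨Or.inr h1, h2⟩,
            Or.inr ⟨Or.inl h1, h2⟩, Or.inr ⟨Or.inr h1, h2⟩]
  · intro hbox
    have hne : (f p : Matrix.GeneralLinearGroup (Fin 2) F) ≠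
        (f p' : Matrix.GeneralLinearGroup (Fin 2) F) := by
      intro hEq
      have hpp : p = p' := hinj (Subtype.ext hEq)
      subst hpp
      rcases hbox with ⟨h1 | h1, -⟩ | ⟨h1 | h1, -⟩ <;> exact hone _ h1
    refine ⟨hne, ?_⟩
    rcases hbox with ⟨h1 | h1, h2⟩ | ⟨h1 | h1, h2⟩
    exacts [Or.inl (Or.inr (Or.inl ⟨h1, h2.symm⟩)),
            Or.inl (Or.inl ⟨h1, h2.symm⟩),
            Or.inl (Or.inr (Or.inr (Or.inr ⟨h1, h2.symm⟩))),
            Or.inl (Or.inr (Or.inr (Or.inl ⟨h1, h2.symm⟩)))]
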